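/- The limit of q(s) as s → ∞ is 0. -/

import Mathlib

open MeasureTheory Filter Real

theorem stmt_3 (a μ A : ℝ) (ha : 0 < a) (hμ : 1 / 3 < μ) (hA : 0 < A)
    (q : ℝ → ℝ) (hq : ContDiff ℝ 2 q)
    (hode : ∀ s : ℝ, deriv (deriv q) s * q s + a * s * deriv q s * q s
      + μ * q s + (1 / 3) * s * deriv q s = 0)
    (hq0 : q 0 = A) (hq0' : deriv q 0 = 0)
    (hpos : ∀ s : ℝ, 0 < q s) :
    Tendsto q atTop (nhds 0) := by
  have hμ0 : 0 < μ := lt_trans (by norm_num) hμ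
  set u := deriv q with hu
  have hq2 : ContDiff ℝ (1+1) q := by norm_num; exact hq
  have hdq : Differentiable ℝ q := hq.differentiable (by norm_num)
  have hu1 : ContDiff ℝ 1 u := (contDiff_succ_iff_deriv.mp hq2).2.2
  have hdu : Differentiable ℝ u := hu1.differentiable one_ne_zero
  have hode' : ∀ s, deriv u s = -μ - a*s*u s - s*u s/(3*q s) := by
    intro s
    have h := hode s
    have hqs : q s ≠ 0 := (hpos s).ne'
    field_simp
    linear_combination (3:ℝ) * h
  -- u ≤ 0 on [0, ∞)
  have hun : ∀ s, 0 ≤ s → u s ≤ 0 := by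
    intro s1 hs1
    by_contra hcon
    push_neg at hcon
    have hs1' : 0 < s1 := by
      rcases hs1.lt_or_eq with h | h
      · exact h
      · exfalso; rw [← h, hq0'] at hcon; exact lt_irrefl 0 hcon
    set Z := Set.Icc 0 s1 ∩ u ⁻¹' Set.Iic 0 with hZ
    have hZc : IsCompact Z := isCompact_Icc.inter_right (isClosed_Iic.preimage hdu.continuous)
    have hZne : Z.Nonempty := ⟨0, ⟨le_refl 0, hs1⟩, by simp [hq0']⟩
    set t := sSup Z with ht
    have htZ : t ∈ Z := hZc.sSup_mem hZne
    have ht0 : 0 ≤ t := htZ.1.1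
    have hts1 : t < s1 := lt_of_le_of_ne htZ.1.2 (by
      intro h; rw [h] at htZ; exact absurd htZ.2 (not_le.mpr hcon))
    have hupos : ∀ x ∈ Set.Ioc t s1, 0 < u x := by
      intro x hx
      by_contra hx0
      push_neg at hx0
      have hxZ : x ∈ Z := ⟨⟨le_trans ht0 hx.1.le, hx.2⟩, hx0⟩
      exact absurd (le_csSup hZc.bddAbove hxZ) (not_le.mpr hx.1)
    have hanti : StrictAntiOn u (Set.Icc t s1) := by
      apply strictAntiOn_of_deriv_neg (convex_Icc t s1) hdu.continuous.continuousOn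
      intro x hx
      rw [interior_Icc] at hx
      have hx0 : 0 < x := lt_of_le_of_lt ht0 hx.1
      have hux : 0 < u x := hupos x ⟨hx.1, hx.2.le⟩
      rw [hode']
      have h1 : 0 < a * x * u x := by positivity
      have h2 : 0 < x * u x / (3 * q x) := by have := hpos x; positivity
      linarith
    have := hanti ⟨le_refl t, hts1.le⟩ ⟨hts1.le, le_refl s1⟩ hts1
    have hut : u t ≤ 0 := htZ.2
    linarith
  have hderq : ∀ s, HasDerivAt q (u s) s := fun s => (hdq s).hasDerivAt
  -- q is antitone on [0,∞)
  have hqanti : AntitoneOn q (Set.Ici 0) := by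
    apply antitoneOn_of_deriv_nonpos (convex_Ici 0) hdq.continuous.continuousOn
      (hdq.differentiableOn)
    intro x hx
    rw [interior_Ici] at hx
    exact hun x (le_of_lt hx)
  -- core: q cannot stay above any positive constant
  have hcore : ∀ c : ℝ, 0 < c → ¬ (∀ s, 0 ≤ s → c ≤ q s) := by
    intro c hc hqc
    set k := a + 1/(3*c) with hk
    have hk0 : 0 < k := by positivity
    have hden : ∀ s : ℝ, (0:ℝ) < 1 + k*s^2 := fun s => by positivity
    -- derivative of E s = exp (k*s^2/2)
    have hE : ∀ s : ℝ, HasDerivAt (fun s : ℝ => Real.exp (k*s^2/2)) (k*s*Real.exp (k*s^2/2)) s := by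
      intro s
      have h1 : HasDerivAt (fun s : ℝ => k*s^2/2) (k*s) s := by
        have := ((hasDerivAt_pow 2 s).const_mul k).div_const 2
        refine this.congr_deriv ?_; push_cast; ring
      have := h1.exp
      convert this using 1; ring
    -- derivative of P s = s * E s / (1 + k*s^2)
    have hP : ∀ s : ℝ, HasDerivAt (fun s : ℝ => s * Real.exp (k*s^2/2) / (1 + k*s^2))
        (Real.exp (k*s^2/2) * (1 + k^2*s^4) / (1 + k*s^2)^2) s := by
      intro s
      have hnum : HasDerivAt (fun s : ℝ => s * Real.exp (k*s^2/2))
          (1 * Real.exp (k*s^2/2) + s * (k*s*Real.exp (k*s^2/2))) s :=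
        (hasDerivAt_id s).mul (hE s)
      have hd : HasDerivAt (fun s : ℝ => 1 + k*s^2) (k*(2*s)) s := by
        have := ((hasDerivAt_pow 2 s).const_mul k).const_add 1
        refine this.congr_deriv ?_; push_cast; ring
      have := hnum.div hd (hden s).ne'
      refine this.congr_deriv ?_
      field_simp
      ring
    -- F and its derivative
    set F : ℝ → ℝ := fun s => u s * Real.exp (k*s^2/2) + μ * (s * Real.exp (k*s^2/2) / (1 + k*s^2)) with hF
    have hFd : ∀ s : ℝ, HasDerivAt F
        ((deriv u s + k*s*u s) * Real.exp (k*s^2/2)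
          + μ * (Real.exp (k*s^2/2) * (1 + k^2*s^4) / (1 + k*s^2)^2)) s := by
      intro s
      have h1 : HasDerivAt u (deriv u s) s := (hdu s).hasDerivAt
      have := (h1.mul (hE s)).add ((hP s).const_mul μ)
      refine this.congr_deriv ?_
      ring
    have hFanti : AntitoneOn F (Set.Ici 0) := by
      apply antitoneOn_of_deriv_nonpos (convex_Ici 0)
      · exact Continuous.continuousOn (continuous_iff_continuousAt.mpr
          fun x => (hFd x).differentiableAt.continuousAt)
      · exact fun x _ => (hFd x).differentiableAt.differentiableWithinAt
      · intro x hx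
        rw [interior_Ici] at hx
        rw [(hFd x).deriv]
        have hx0 : (0:ℝ) < x := hx
        have hux : u x ≤ 0 := hun x hx.le
        have hqx : c ≤ q x := hqc x hx.le
        have hEx : 0 < Real.exp (k*x^2/2) := Real.exp_pos _
        -- deriv u x + k x u x ≤ -μ
        have key : x*u x/(3*c) - x*u x/(3*q x) ≤ 0 := by
          rw [div_sub_div _ _ (by positivity : (3:ℝ)*c ≠ 0) (by have := hpos x; positivity : (3:ℝ)*q x ≠ 0)]
          apply div_nonpos_of_nonpos_of_nonneg
          · nlinarith [mul_nonpos_of_nonneg_of_nonpos (le_of_lt hx0) hux]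
          · have := hpos x; positivity
        have h1 : deriv u x + k*x*u x ≤ -μ := by
          rw [hode', hk]
          have hexp : (a + 1/(3*c))*x*u x = a*x*u x + x*u x/(3*c) := by ring
          linarith [hexp]
        have h2 : (deriv u x + k*x*u x) * Real.exp (k*x^2/2) ≤ -μ * Real.exp (k*x^2/2) :=
          mul_le_mul_of_nonneg_right h1 hEx.le
        have h3 : Real.exp (k*x^2/2) * (1 + k^2*x^4) / (1 + k*x^2)^2 ≤ Real.exp (k*x^2/2) := by
          rw [div_le_iff₀ (by positivity)]
          nlinarith [mul_nonneg (Real.exp_pos (k*x^2/2)).le (mul_nonneg hk0.le (sq_nonneg x))]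
        nlinarith
    have hF0 : F 0 = 0 := by simp [hF, hq0']
    have hub : ∀ s, 0 ≤ s → u s ≤ -μ * s / (1 + k*s^2) := by
      intro s hs
      have := hFanti (Set.mem_Ici.mpr (le_refl 0)) (Set.mem_Ici.mpr hs) hs
      rw [hF0] at this
      have hEx : 0 < Real.exp (k*s^2/2) := Real.exp_pos _
      have h4 : (u s*(1+k*s^2)+μ*s) * Real.exp (k*s^2/2) = (F s) * (1+k*s^2) := by
        simp only [hF]
        field_simp
      have h5 : u s*(1+k*s^2)+μ*s ≤ 0 := by
        have h0 : (u s*(1+k*s^2)+μ*s) * Real.exp (k*s^2/2) ≤ 0 * Real.exp (k*s^2/2) := by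
          rw [zero_mul, h4]
          exact mul_nonpos_of_nonpos_of_nonneg this (hden s).le
        exact (mul_le_mul_iff_left₀ hEx).mp h0
      rw [le_div_iff₀ (hden s)]
      linarith
    -- φ s = q s + (μ/(1+k)) * log s is antitone on [1,∞)
    have hk1 : (0:ℝ) < 1 + k := by linarith
    set φ : ℝ → ℝ := fun s => q s + (μ/(1+k)) * Real.log s with hφ
    have hφanti : AntitoneOn φ (Set.Ici 1) := by
      apply antitoneOn_of_deriv_nonpos (convex_Ici 1)
      · apply ContinuousOn.add hdq.continuous.continuousOn
        apply ContinuousOn.mul continuousOn_const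
        apply Real.continuousOn_log.mono
        intro x hx
        simp only [Set.mem_compl_iff, Set.mem_singleton_iff]
        intro h; rw [h] at hx; exact absurd hx (by norm_num)
      · intro x hx
        rw [interior_Ici] at hx
        have hx0 : (0:ℝ) < x := lt_trans one_pos hx
        exact ((hderq x).add (((Real.hasDerivAt_log hx0.ne').const_mul (μ/(1+k))))).differentiableAt.differentiableWithinAt
      · intro x hx
        rw [interior_Ici] at hx
        have hx0 : (0:ℝ) < x := lt_trans one_pos hx
        have hd : HasDerivAt φ (u x + (μ/(1+k)) * x⁻¹) x :=
          (hderq x).add ((Real.hasDerivAt_log hx0.ne').const_mul (μ/(1+k)))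
        rw [hd.deriv]
        have h6 : u x ≤ -μ * x / (1 + k*x^2) := hub x hx0.le
        have hx1 : (1:ℝ) < x := hx
        have h7 : (μ/(1+k)) * x⁻¹ ≤ μ * x / (1 + k*x^2) := by
          rw [inv_eq_one_div, div_mul_div_comm, mul_one]
          rw [div_le_div_iff₀ (by positivity) (hden x)]
          nlinarith [mul_pos hμ0 (show (0:ℝ) < x^2 - 1 by nlinarith)]
        have h8 : -μ * x / (1 + k*x^2) = -(μ * x / (1 + k*x^2)) := by ring_nf
        linarith [h8 ▸ h6]
    set T := Real.exp ((1+k)*(q 1)/μ + 1) with hT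
    have hq1 : 0 < q 1 := hpos 1
    have hT1 : (1:ℝ) ≤ T := Real.one_le_exp (by positivity)
    have h9 : φ T ≤ φ 1 := hφanti (Set.mem_Ici.mpr le_rfl) (Set.mem_Ici.mpr hT1) hT1
    have hlogT : Real.log T = (1+k)*(q 1)/μ + 1 := Real.log_exp _
    have h10 : q T < 0 := by
      simp only [hφ, hlogT, Real.log_one, mul_zero, add_zero] at h9
      have hmm : (μ/(1+k)) * ((1+k)*(q 1)/μ + 1) = q 1 + μ/(1+k) := by
        field_simp
      nlinarith [div_pos hμ0 hk1]
    exact absurd h10 (not_lt.mpr (hpos T).le)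
  -- conclude
  rw [Metric.tendsto_atTop]
  intro ε hε
  obtain ⟨s0, hs0, hqs0⟩ : ∃ s, 0 ≤ s ∧ q s < ε := by
    by_contra h
    push_neg at h
    exact hcore ε hε h
  refine ⟨s0, fun n hn => ?_⟩
  have hn0 : (0:ℝ) ≤ n := le_trans hs0 hn
  have : q n ≤ q s0 := hqanti (Set.mem_Ici.mpr hs0) (Set.mem_Ici.mpr hn0) hn
  rw [Real.dist_eq, sub_zero, abs_of_pos (hpos n)]
  linarith
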